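/- Let π*_λ solve the penalized regression min_π ‖w − Zπ‖₂² subject to Pen(π) ≤ t_λ, with t_λ > 0 and ‖w − Zπ*_λ‖₂ > 0. Set β* = C/t_λ and δ = 2β*‖w − Zπ*_λ‖₂. Then the pair (β*, π*_λ) solves the modulus problem sup{2β : β‖w − Zπ‖₂ ≤ δ/2, β·Pen(π) ≤ C} with optimal value 2C/t_λ. -/

import Mathlib

open Matrix

noncomputable def l2norm {n : ℕ} (x : Fin n → ℝ) : ℝ := Real.sqrt (∑ i, x i ^ 2)

/-- If `π*` solves the penalized regression `min_{π ∈ S} ‖w − Zπ‖₂²` s.t. `Pen π ≤ t` with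
`t > 0` and `‖w − Zπ*‖₂ > 0`, then setting `β* = C/t` and `δ = 2β*‖w − Zπ*‖₂`, the pair
`(β*, π*)` solves the modulus problem `sup{2β : β‖w − Zπ‖₂ ≤ δ/2, β·Pen(π) ≤ C, β ≥ 0, π ∈ S}`
with optimal value `2C/t`. -/
theorem penalized_regression_solves_modulus {n k : ℕ} (S : Submodule ℝ (Fin k → ℝ))
    (Pen : (Fin k → ℝ) → ℝ)
    (htri : ∀ x y, x ∈ S → y ∈ S → Pen (x + y) ≤ Pen x + Pen y)
    (hhom : ∀ (c : ℝ) (x), x ∈ S → Pen (c • x) = |c| * Pen x)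
    (Z : Matrix (Fin n) (Fin k) ℝ) (w : Fin n → ℝ)
    (C t : ℝ) (hC : 0 < C) (ht : 0 < t)
    (πs : Fin k → ℝ) (hπS : πs ∈ S) (hfeas : Pen πs ≤ t)
    (hmin : ∀ π ∈ S, Pen π ≤ t → l2norm (w - Z.mulVec πs) ≤ l2norm (w - Z.mulVec π))
    (hres : 0 < l2norm (w - Z.mulVec πs)) :
    (C / t) * l2norm (w - Z.mulVec πs) ≤ (2 * (C / t) * l2norm (w - Z.mulVec πs)) / 2 ∧
    (C / t) * Pen πs ≤ C ∧
    2 * (C / t) = 2 * C / t ∧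
    ∀ β : ℝ, ∀ π ∈ S, 0 ≤ β →
      β * l2norm (w - Z.mulVec π) ≤ (2 * (C / t) * l2norm (w - Z.mulVec πs)) / 2 →
      β * Pen π ≤ C → 2 * β ≤ 2 * C / t := by
  have hCt : 0 < C / t := div_pos hC ht
  refine ⟨by ring_nf; exact le_refl _, ?_, by ring, ?_⟩
  · have h1 : (C / t) * Pen πs ≤ (C / t) * t := mul_le_mul_of_nonneg_left hfeas hCt.le
    have h2 : (C / t) * t = C := by field_simp
    linarith
  · intro β π hπ hβ h1 h2
    have key : β ≤ C / t := by
      by_contra h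
      push_neg at h
      have hβpos : 0 < β := lt_trans hCt h
      have hPen : Pen π ≤ t := by
        have : Pen π ≤ C / β := (le_div_iff₀' hβpos).mpr h2
        refine this.trans ?_
        rw [div_le_iff₀ hβpos]
        have := (div_lt_iff₀ ht).mp h
        linarith
      have hm := hmin π hπ hPen
      have : β * l2norm (w - Z.mulVec πs) ≤ (C / t) * l2norm (w - Z.mulVec πs) := by
        calc β * l2norm (w - Z.mulVec πs) ≤ β * l2norm (w - Z.mulVec π) :=
              mul_le_mul_of_nonneg_left hm hβpos.le
          _ ≤ (2 * (C / t) * l2norm (w - Z.mulVec πs)) / 2 := h1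
          _ = (C / t) * l2norm (w - Z.mulVec πs) := by ring
      have := (mul_le_mul_iff_of_pos_right hres).mp this
      linarith
    have : 2 * C / t = 2 * (C / t) := by ring
    linarith
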